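/- Let X : ℝ → [0,∞) be continuous with X(0) = 0 and X(t) → ∞ as |t| → ∞, and let d_X be the associated pseudometric on ℝ (as for the self-similar CRT). For r ≥ 0, set Γ₊(r) = sup{t ≥ 0 : X(t) = r} and Γ₋(r) = inf{t ≤ 0 : X(t) = r}. Then for all r, r' ≥ 0: d_X(Γ₊(r), Γ₊(r')) = |r - r'|, d_X(Γ₋(r), Γ₋(r')) = |r - r'|, and d_X(Γ₊(r), Γ₋(r)) = 0. In particular, r ↦ [Γ₊(r)] is a geodesic ray from the root in the quotient tree. -/

import Mathlib

open Set Filter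

/-- `č(s,t)` for the self-similar CRT pseudometric. -/
noncomputable def crtCheck (X : ℝ → ℝ) (s t : ℝ) : ℝ :=
  if 0 ≤ s * t then sInf (X '' Set.uIcc s t)
  else sInf (X '' (Set.Ioo (min s t) (max s t))ᶜ)

/-- The self-similar CRT pseudometric `d_X(s,t) = X s + X t - 2 č(s,t)`. -/
noncomputable def crtDist (X : ℝ → ℝ) (s t : ℝ) : ℝ :=
  X s + X t - 2 * crtCheck X s t

/-- `Γ₊(r) = sup {t ≥ 0 : X t = r}`, the last hitting time of level `r` on the
positive half-line. -/
noncomputable def GammaPlus (X : ℝ → ℝ) (r : ℝ) : ℝ :=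
  sSup {t : ℝ | 0 ≤ t ∧ X t = r}

/-- `Γ₋(r) = inf {t ≤ 0 : X t = r}`, the first hitting time of level `r` on the
negative half-line. -/
noncomputable def GammaMinus (X : ℝ → ℝ) (r : ℝ) : ℝ :=
  sInf {t : ℝ | t ≤ 0 ∧ X t = r}

lemma gammaPlus_spec {X : ℝ → ℝ} (hcont : Continuous X) (h0 : X 0 = 0)
    (htop : Tendsto X atTop atTop) {r : ℝ} (hr : 0 ≤ r) :
    0 ≤ GammaPlus X r ∧ X (GammaPlus X r) = r ∧ ∀ t, GammaPlus X r < t → r < X t := by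
  set S : Set ℝ := {t : ℝ | 0 ≤ t ∧ X t = r} with hS
  have hclosed : IsClosed S := by
    have : S = Ici 0 ∩ X ⁻¹' {r} := by ext t; simp [hS, Set.mem_setOf_eq, and_comm]
    rw [this]
    exact isClosed_Ici.inter (isClosed_singleton.preimage hcont)
  obtain ⟨b, hb⟩ := eventually_atTop.mp (htop.eventually_gt_atTop r)
  have hbdd : BddAbove S := by
    refine ⟨b, fun t ht => ?_⟩
    by_contra h
    push_neg at h
    exact absurd ht.2 (ne_of_gt (hb t h.le))
  have hne : S.Nonempty := by
    obtain ⟨a, ha⟩ := eventually_atTop.mp (htop.eventually_ge_atTop r)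
    have hT : (0:ℝ) ≤ max a 0 := le_max_right a 0
    have hrT : r ∈ Icc (X 0) (X (max a 0)) := by
      constructor
      · rw [h0]; exact hr
      · exact ha _ (le_max_left a 0)
    obtain ⟨c, hc, hXc⟩ := intermediate_value_Icc hT hcont.continuousOn hrT
    exact ⟨c, hc.1, hXc⟩
  have hmem : GammaPlus X r ∈ S := hclosed.csSup_mem hne hbdd
  refine ⟨hmem.1, hmem.2, fun t ht => ?_⟩
  by_contra h
  push_neg at h
  obtain ⟨a, ha⟩ := eventually_atTop.mp (htop.eventually_ge_atTop r)
  have hT : t ≤ max a t := le_max_right a t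
  have hrT : r ∈ Icc (X t) (X (max a t)) := ⟨h, ha _ (le_max_left a t)⟩
  obtain ⟨c, hc, hXc⟩ := intermediate_value_Icc hT hcont.continuousOn hrT
  have hcS : c ∈ S := ⟨hmem.1.trans (ht.le.trans hc.1), hXc⟩
  have := le_csSup hbdd hcS
  exact absurd this (not_le.mpr (lt_of_lt_of_le ht hc.1))

lemma gammaPlus_mono {X : ℝ → ℝ} (hcont : Continuous X) (h0 : X 0 = 0)
    (htop : Tendsto X atTop atTop) {r r' : ℝ} (hr : 0 ≤ r) (hrr' : r ≤ r') :
    GammaPlus X r ≤ GammaPlus X r' := by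
  by_contra h
  push_neg at h
  have h1 := (gammaPlus_spec hcont h0 htop (hr.trans hrr')).2.2 _ h
  rw [(gammaPlus_spec hcont h0 htop hr).2.1] at h1
  exact absurd hrr' (not_le.mpr h1)

lemma crtDist_gammaPlus {X : ℝ → ℝ} (hcont : Continuous X) (hnonneg : ∀ t, 0 ≤ X t)
    (h0 : X 0 = 0) (htop : Tendsto X atTop atTop) {r r' : ℝ} (hr : 0 ≤ r) (hrr' : r ≤ r') :
    crtDist X (GammaPlus X r) (GammaPlus X r') = r' - r := by
  have hr' : 0 ≤ r' := hr.trans hrr'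
  obtain ⟨hg1, hX1, hgt1⟩ := gammaPlus_spec hcont h0 htop hr
  obtain ⟨hg2, hX2, _⟩ := gammaPlus_spec hcont h0 htop hr'
  have hle : GammaPlus X r ≤ GammaPlus X r' := gammaPlus_mono hcont h0 htop hr hrr'
  have hcheck : crtCheck X (GammaPlus X r) (GammaPlus X r') = r := by
    rw [crtCheck, if_pos (mul_nonneg hg1 hg2), uIcc_of_le hle]
    have hlow : ∀ u ∈ Icc (GammaPlus X r) (GammaPlus X r'), r ≤ X u := by
      intro u hu
      rcases eq_or_lt_of_le hu.1 with h | h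
      · rw [← h, hX1]
      · exact (hgt1 u h).le
    apply le_antisymm
    · exact csInf_le ⟨0, fun y ⟨u, _, hu⟩ => hu ▸ hnonneg u⟩
        ⟨GammaPlus X r, ⟨le_refl _, hle⟩, hX1⟩
    · exact le_csInf (⟨X (GammaPlus X r), GammaPlus X r, ⟨le_refl _, hle⟩, rfl⟩)
        (fun y ⟨u, hu, hy⟩ => hy ▸ hlow u hu)
  rw [crtDist, hcheck, hX1, hX2]; ring

lemma crtCheck_comm (X : ℝ → ℝ) (s t : ℝ) : crtCheck X s t = crtCheck X t s := by
  rw [crtCheck, crtCheck, mul_comm, Set.uIcc_comm, min_comm, max_comm]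

lemma crtDist_comm (X : ℝ → ℝ) (s t : ℝ) : crtDist X s t = crtDist X t s := by
  rw [crtDist, crtDist, crtCheck_comm]; ring

lemma gammaMinus_eq (X : ℝ → ℝ) (r : ℝ) :
    GammaMinus X r = - GammaPlus (fun t => X (-t)) r := by
  have hset : -{t : ℝ | t ≤ 0 ∧ X t = r} = {t : ℝ | 0 ≤ t ∧ X (-t) = r} := by
    ext t
    simp [Set.mem_neg, neg_nonpos]
  rw [GammaMinus, GammaPlus, Real.sInf_def, hset]

lemma crtCheck_neg (X : ℝ → ℝ) (s t : ℝ) :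
    crtCheck X (-s) (-t) = crtCheck (fun u => X (-u)) s t := by
  rw [crtCheck, crtCheck, neg_mul_neg]
  have himg : ∀ A : Set ℝ, X '' (-A) = (fun u => X (-u)) '' A := by
    intro A
    rw [← Set.image_neg_eq_neg, Set.image_image]
  split_ifs with h
  · rw [← neg_uIcc, himg]
  · rw [min_neg_neg, max_neg_neg, ← neg_Ioo, show (-Ioo (s ⊓ t) (s ⊔ t))ᶜ = -(Ioo (s ⊓ t) (s ⊔ t))ᶜ from rfl, himg]

lemma crtDist_neg (X : ℝ → ℝ) (s t : ℝ) :
    crtDist X (-s) (-t) = crtDist (fun u => X (-u)) s t := by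
  rw [crtDist, crtDist, crtCheck_neg]

/-- the maps `r ↦ Γ₊(r)` and `r ↦ Γ₋(r)` project to the same
geodesic ray from the root in the tree coded by `X`:
`d_X(Γ₊(r),Γ₊(r')) = d_X(Γ₋(r),Γ₋(r')) = |r - r'|` and `d_X(Γ₊(r),Γ₋(r)) = 0`. -/
theorem crt_spine_geodesic (X : ℝ → ℝ)
    (hcont : Continuous X) (hnonneg : ∀ t, 0 ≤ X t) (h0 : X 0 = 0)
    (hdiv : Tendsto X (cocompact ℝ) atTop) :
    ∀ r r' : ℝ, 0 ≤ r → 0 ≤ r' →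
      crtDist X (GammaPlus X r) (GammaPlus X r') = |r - r'| ∧
      crtDist X (GammaMinus X r) (GammaMinus X r') = |r - r'| ∧
      crtDist X (GammaPlus X r) (GammaMinus X r) = 0 := by
  rw [cocompact_eq_atBot_atTop] at hdiv
  obtain ⟨hbot, htop⟩ := tendsto_sup.mp hdiv
  set Y : ℝ → ℝ := fun u => X (-u) with hY
  have hYcont : Continuous Y := hcont.comp continuous_neg
  have hY0 : Y 0 = 0 := by simp [hY, h0]
  have hYnonneg : ∀ t, 0 ≤ Y t := fun t => hnonneg _
  have hYtop : Tendsto Y atTop atTop := hbot.comp tendsto_neg_atTop_atBot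
  intro r r' hr hr'
  have plus : ∀ a b : ℝ, 0 ≤ a → 0 ≤ b →
      crtDist X (GammaPlus X a) (GammaPlus X b) = |a - b| := by
    intro a b ha hb
    rcases le_total a b with h | h
    · rw [crtDist_gammaPlus hcont hnonneg h0 htop ha h, abs_sub_comm,
        abs_of_nonneg (by linarith)]
    · rw [crtDist_comm, crtDist_gammaPlus hcont hnonneg h0 htop hb h,
        abs_of_nonneg (by linarith)]
  have plusY : ∀ a b : ℝ, 0 ≤ a → 0 ≤ b →
      crtDist Y (GammaPlus Y a) (GammaPlus Y b) = |a - b| := by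
    intro a b ha hb
    rcases le_total a b with h | h
    · rw [crtDist_gammaPlus hYcont hYnonneg hY0 hYtop ha h, abs_sub_comm,
        abs_of_nonneg (by linarith)]
    · rw [crtDist_comm, crtDist_gammaPlus hYcont hYnonneg hY0 hYtop hb h,
        abs_of_nonneg (by linarith)]
  refine ⟨plus r r' hr hr', ?_, ?_⟩
  · rw [gammaMinus_eq, gammaMinus_eq, crtDist_neg]
    exact plusY r r' hr hr'
  · -- d(Γ₊ r, Γ₋ r) = 0
    obtain ⟨hg1, hX1, hgt1⟩ := gammaPlus_spec hcont h0 htop hr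
    obtain ⟨hg2, hX2, hgt2⟩ := gammaPlus_spec hYcont hY0 hYtop hr
    have hGm : GammaMinus X r = - GammaPlus Y r := gammaMinus_eq X r
    have hgm_le : GammaMinus X r ≤ 0 := by rw [hGm]; linarith
    have hXm : X (GammaMinus X r) = r := by rw [hGm]; exact hX2
    have hltm : ∀ t, t < GammaMinus X r → r < X t := by
      intro t ht
      have : GammaPlus Y r < -t := by rw [hGm] at ht; linarith
      have := hgt2 _ this
      simpa [hY] using this
    rw [crtDist]
    have hcheck : crtCheck X (GammaPlus X r) (GammaMinus X r) = r := by
      rw [crtCheck]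
      split_ifs with hsgn
      · -- product ≥ 0 but also ≤ 0, so one factor is 0 and r = 0
        have hle0 : GammaPlus X r * GammaMinus X r ≤ 0 := mul_nonpos_of_nonneg_of_nonpos hg1 hgm_le
        have heq0 : GammaPlus X r * GammaMinus X r = 0 := le_antisymm hle0 hsgn
        have hr0 : r = 0 := by
          rcases mul_eq_zero.mp heq0 with h | h
          · rw [← hX1, h, h0]
          · rw [← hXm, h, h0]
        subst hr0
        have h0mem : (0:ℝ) ∈ Set.uIcc (GammaPlus X 0) (GammaMinus X 0) := by
          rw [Set.mem_uIcc]; right; exact ⟨hgm_le, hg1⟩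
        apply le_antisymm
        · exact csInf_le ⟨0, fun y ⟨u, _, hu⟩ => hu ▸ hnonneg u⟩ ⟨0, h0mem, h0⟩
        · exact le_csInf ⟨X 0, 0, h0mem, rfl⟩ (fun y ⟨u, _, hy⟩ => hy ▸ hnonneg u)
      · have hmm : GammaMinus X r ≤ GammaPlus X r := hgm_le.trans hg1
        rw [min_comm, max_comm, min_eq_left hmm, max_eq_right hmm] at *
        have hlow : ∀ u ∈ (Set.Ioo (GammaMinus X r) (GammaPlus X r))ᶜ, r ≤ X u := by
          intro u hu
          rw [Set.mem_compl_iff, Set.mem_Ioo, not_and_or, not_lt, not_lt] at hu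
          rcases hu with h | h
          · rcases eq_or_lt_of_le h with h | h
            · rw [h, hXm]
            · exact (hltm u h).le
          · rcases eq_or_lt_of_le h with h | h
            · rw [← h, hX1]
            · exact (hgt1 u h).le
        have hmem : GammaPlus X r ∈ (Set.Ioo (GammaMinus X r) (GammaPlus X r))ᶜ := by
          simp [Set.mem_Ioo]
        apply le_antisymm
        · exact csInf_le ⟨0, fun y ⟨u, _, hu⟩ => hu ▸ hnonneg u⟩ ⟨GammaPlus X r, hmem, hX1⟩
        · exact le_csInf ⟨X (GammaPlus X r), GammaPlus X r, hmem, rfl⟩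
            (fun y ⟨u, hu, hy⟩ => hy ▸ hlow u hu)
    rw [hcheck, hX1, hXm]; ring
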